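/- Let T be the quantum torus over ℚ(v^{1/2}) with X^e X^f = q^{½Λ₂(e,f)} X^{e+f}, where Λ₂ = ½·M with M the integer matrix with rows (0,1,−1,0), (−1,0,0,−1), (1,0,0,−1), (0,1,1,0). With y₁ = X^{e₃−e₁} + X^{e₂−e₁} and y₂ = X^{e₁+e₄−e₂} + X^{−e₂}, the quantum Serre relation Σ_{t=0}^{2} (−1)ᵗ [2 choose t]_v · y₁^{2−t} y₂ y₁ᵗ = 0 holds; equivalently [y₁,[y₁,y₂]_v]_{v^{-1}} = 0. -/

import Mathlib

open Matrix

/-- The quantum Serre relation in the `A₂` quantum torus with the compatible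
pair `(Λ₂, B̃)`, `Λ₂ = ½M`: with `X^e X^f = q^{½Λ₂(e,f)} X^{e+f} = w^{M(e,f)} X^{e+f}`
(`w = v^{1/2}`, `q = v²`), one has
`Σ_{t=0}^{2} (−1)ᵗ [2 choose t]_v y₁^{2−t} y₂ y₁ᵗ = 0`. -/
theorem quantum_serre_relation_A2 {K T : Type*} [Field K] [Ring T] [Algebra K T]
    (v w : K) (hw : w ≠ 0) (hv : v = w ^ 2) (X : (Fin 4 → ℤ) → T)
    (hX : ∀ e f : Fin 4 → ℤ,
      X e * X f =
        (w ^ (e ⬝ᵥ ((!![0,1,-1,0; -1,0,0,-1; 1,0,0,-1; 0,1,1,0] :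
          Matrix (Fin 4) (Fin 4) ℤ) *ᵥ f))) • X (e + f)) :
    let y₁ := X ![-1, 0, 1, 0] + X ![-1, 1, 0, 0]
    let y₂ := X ![1, -1, 0, 1] + X ![0, -1, 0, 0]
    y₁ ^ 2 * y₂ - (v + v⁻¹) • (y₁ * y₂ * y₁) + y₂ * y₁ ^ 2 = 0 := by
  intro y₁ y₂
  simp only [y₁, y₂, pow_two, mul_add, add_mul, hX, smul_mul_assoc, mul_smul_comm, smul_smul,
    smul_add]
  norm_num [Matrix.mulVec, dotProduct, Fin.sum_univ_four, Matrix.cons_add_cons,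
    Matrix.empty_add_empty, hX, smul_smul, Matrix.cons_val_two, Matrix.cons_val_three, Matrix.head_cons, Matrix.tail_cons]
  subst hv
  have h2 : w ^ 2 ≠ 0 := pow_ne_zero _ hw
  have h2z : w ^ (2:ℤ) ≠ 0 := zpow_ne_zero _ hw
  have h3z : w ^ (3:ℤ) ≠ 0 := zpow_ne_zero _ hw
  match_scalars <;>
  · field_simp
    try simp only [mul_inv_cancel₀ h2, inv_mul_cancel₀ h2, mul_inv_cancel₀ h2z, inv_mul_cancel₀ h2z, mul_inv_cancel₀ h3z, inv_mul_cancel₀ h3z]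
    ring
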